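/- Let k, r be integers with 1 ≤ r ≤ k−r, let S be an 𝔽_q-subspace of 𝔽_{q^n} with dim_{𝔽_q}(S) = k−r, let a₁, …, a_r ∈ 𝔽_{q^n} be 𝔽_q-linearly independent, let T = ⟨a₁, …, a_r⟩_{𝔽_q}, and let U = S × T. Then the set of points of weight r in L_U different from ⟨(1,0)⟩_{𝔽_{q^n}} is exactly { ⟨(ξ,1)⟩_{𝔽_{q^n}} : ξ ∈ a₁^{−1}S ∩ … ∩ a_r^{−1}S }, and its cardinality is q^j, where j = dim_{𝔽_q}(a₁^{−1}S ∩ … ∩ a_r^{−1}S). -/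

import Mathlib

open Submodule

/-- The span `⟨1, μ, …, μ^{m-1}⟩_{F_q}`. -/
noncomputable def pows (Fq : Type*) {Fqn : Type*} [Field Fq] [Field Fqn] [Algebra Fq Fqn]
    (μ : Fqn) (m : ℕ) : Submodule Fq Fqn :=
  Submodule.span Fq (Set.range fun i : Fin m => μ ^ (i : ℕ))

/-- Multiplication of a subspace by a scalar: `b · W`. -/
noncomputable def bmul (Fq : Type*) {Fqn : Type*} [Field Fq] [Field Fqn] [Algebra Fq Fqn]
    (b : Fqn) (W : Submodule Fq Fqn) : Submodule Fq Fqn :=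
  W.map (LinearMap.mulLeft Fq b)

/-- The `F_q`-linear set in `PG(1, q^n)` defined by an `F_q`-subspace `U` of `F_{q^n}²`:
the set of projective points `⟨v⟩_{F_{q^n}}`, `v ∈ U \ {0}`, viewed as
one-dimensional `F_{q^n}`-subspaces of `F_{q^n}²`. -/
def linSet {Fq Fqn : Type*} [Field Fq] [Field Fqn] [Algebra Fq Fqn]
    (U : Submodule Fq (Fqn × Fqn)) : Set (Submodule Fqn (Fqn × Fqn)) :=
  {P | ∃ v : Fqn × Fqn, v ≠ 0 ∧ v ∈ U ∧ P = Submodule.span Fqn {v}}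

/-- The weight of a projective point `P` in the linear set defined by `U`:
`w_{L_U}(P) = dim_{F_q}(U ∩ P)`. -/
noncomputable def weight {Fq Fqn : Type*} [Field Fq] [Field Fqn] [Algebra Fq Fqn]
    (U : Submodule Fq (Fqn × Fqn)) (P : Submodule Fqn (Fqn × Fqn)) : ℕ :=
  Module.finrank Fq ↥(U ⊓ P.restrictScalars Fq)

/-- Let `1 ≤ r ≤ k - r`, `S` an `F_q`-subspace of `F_{q^n}` of dimension
`k - r`, `a₁, …, a_r` `F_q`-linearly independent, `T = ⟨a₁, …, a_r⟩_{F_q}`, `U = S × T`.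
Then the set of points of weight `r` in `L_U` different from `⟨(1,0)⟩` is exactly
`{⟨(ξ,1)⟩ : ξ ∈ a₁⁻¹S ∩ … ∩ a_r⁻¹S}`, and its cardinality is `q^j` with
`j = dim_{F_q}(a₁⁻¹S ∩ … ∩ a_r⁻¹S)`. -/
theorem stmt4 (Fq Fqn : Type*) [Field Fq] [Field Fqn] [Algebra Fq Fqn] [Fintype Fq]
    (q n : ℕ) (hq : Fintype.card Fq = q) (hn : Module.finrank Fq Fqn = n)
    (k r : ℕ) (hr : 1 ≤ r) (hkr : 2 * r ≤ k)
    (S : Submodule Fq Fqn) (hS : Module.finrank Fq ↥S = k - r)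
    (a : Fin r → Fqn) (ha : LinearIndependent Fq a)
    (T : Submodule Fq Fqn) (hT : T = Submodule.span Fq (Set.range a))
    (U : Submodule Fq (Fqn × Fqn)) (hU : U = S.prod T)
    (I : Submodule Fq Fqn) (hI : I = ⨅ i : Fin r, bmul Fq (a i)⁻¹ S) :
    {P | P ∈ linSet U ∧ weight U P = r ∧ P ≠ Submodule.span Fqn {((1 : Fqn), (0 : Fqn))}}
        = {P | ∃ ξ ∈ I, P = Submodule.span Fqn {(ξ, (1 : Fqn))}} ∧
      Set.ncard
        {P | P ∈ linSet U ∧ weight U P = r ∧ P ≠ Submodule.span Fqn {((1 : Fqn), (0 : Fqn))}}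
        = q ^ Module.finrank Fq ↥I := by
  
  classical
  -- basic facts
  have ha0 : ∀ i, a i ≠ 0 := fun i => ha.ne_zero i
  have hTfin : FiniteDimensional Fq T := hT ▸ FiniteDimensional.span_of_finite Fq (Set.finite_range a)
  have hTr : Module.finrank Fq T = r := by
    rw [hT, finrank_span_eq_card ha, Fintype.card_fin]
  -- the linear map λ ↦ (ξ * λ, λ)
  set φ : Fqn → (Fqn →ₗ[Fq] Fqn × Fqn) :=
    fun ξ => (LinearMap.mulLeft Fq ξ).prod LinearMap.id with hφ
  have hφinj : ∀ ξ, Function.Injective (φ ξ) := by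
    intro ξ x y hxy
    simpa [hφ, Function.prod] using congrArg Prod.snd hxy
  -- the subspace W ξ = {λ ∈ T : ξ λ ∈ S}
  set W : Fqn → Submodule Fq Fqn :=
    fun ξ => T ⊓ (S.comap (LinearMap.mulLeft Fq ξ)) with hW
  have hkey : ∀ ξ : Fqn,
      U ⊓ (Submodule.span Fqn {(ξ, (1:Fqn))}).restrictScalars Fq = (W ξ).map (φ ξ) := by
    intro ξ
    ext x
    obtain ⟨x₁, x₂⟩ := x
    simp only [Submodule.mem_inf, Submodule.restrictScalars_mem, Submodule.mem_map, hU,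
      Submodule.mem_prod, Submodule.mem_span_singleton, hW, Submodule.mem_comap, hφ,
      LinearMap.prod_apply, Function.prod, LinearMap.mulLeft_apply, LinearMap.id_apply]
    constructor
    · rintro ⟨⟨h1, h2⟩, c, hc⟩
      have hc1 : c * ξ = x₁ := by simpa using congrArg Prod.fst hc
      have hc2 : c = x₂ := by simpa using congrArg Prod.snd hc
      refine ⟨c, ⟨by rw [hc2]; exact h2, ?_⟩, ?_⟩
      · rw [mul_comm, hc1]; exact h1
      · rw [mul_comm ξ c, hc1, hc2]
    · rintro ⟨y, ⟨hyT, hyS⟩, hy⟩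
      rw [Prod.mk.injEq] at hy
      obtain ⟨hy1, hy2⟩ := hy
      refine ⟨⟨by rwa [hy1] at hyS, by rwa [hy2] at hyT⟩, y, ?_⟩
      rw [Prod.smul_mk, smul_eq_mul, smul_eq_mul, mul_one, mul_comm, hy1, hy2]
  have hwt : ∀ ξ : Fqn, weight U (Submodule.span Fqn {(ξ, (1:Fqn))}) = Module.finrank Fq (W ξ) := by
    intro ξ
    rw [weight, hkey ξ]
    exact ((W ξ).equivMapOfInjective (φ ξ) (hφinj ξ)).finrank_eq.symm
  have hmemI : ∀ ξ : Fqn, ξ ∈ I ↔ ∀ i, a i * ξ ∈ S := by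
    intro ξ
    rw [hI]
    simp only [Submodule.mem_iInf, bmul, Submodule.mem_map, LinearMap.mulLeft_apply]
    refine forall_congr' fun i => ⟨?_, ?_⟩
    · rintro ⟨s, hs, rfl⟩
      rwa [← mul_assoc, mul_inv_cancel₀ (ha0 i), one_mul]
    · intro h
      exact ⟨a i * ξ, h, by rw [← mul_assoc, inv_mul_cancel₀ (ha0 i), one_mul]⟩
  have hWT : ∀ ξ : Fqn, ξ ∈ I ↔ W ξ = T := by
    intro ξ
    rw [hmemI]
    constructor
    · intro h
      have hle : T ≤ S.comap (LinearMap.mulLeft Fq ξ) := by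
        rw [hT, Submodule.span_le]
        rintro _ ⟨i, rfl⟩
        simpa [mul_comm] using h i
      exact inf_eq_left.2 hle
    · intro h i
      have hai : a i ∈ T := hT ▸ Submodule.subset_span ⟨i, rfl⟩
      have : a i ∈ W ξ := h ▸ hai
      simpa [hW, mul_comm] using this.2
  have hweight : ∀ ξ : Fqn,
      (weight U (Submodule.span Fqn {(ξ, (1:Fqn))}) = r ↔ ξ ∈ I) := by
    intro ξ
    rw [hwt ξ, hWT ξ]
    constructor
    · intro h
      exact Submodule.eq_of_le_of_finrank_eq inf_le_left (by rw [h, hTr])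
    · intro h
      rw [h, hTr]
  -- helper: span{(ξ,1)} determines ξ
  have hspan_inj : ∀ ξ₁ ξ₂ : Fqn,
      Submodule.span Fqn {(ξ₁, (1:Fqn))} = Submodule.span Fqn {(ξ₂, (1:Fqn))} → ξ₁ = ξ₂ := by
    intro ξ₁ ξ₂ h
    have : (ξ₁, (1:Fqn)) ∈ Submodule.span Fqn {(ξ₂, (1:Fqn))} := by
      rw [← h]; exact Submodule.mem_span_singleton_self _
    obtain ⟨c, hc⟩ := Submodule.mem_span_singleton.1 this
    have hc2 : c = 1 := by simpa using congrArg Prod.snd hc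
    have hc1 : c * ξ₂ = ξ₁ := by simpa using congrArg Prod.fst hc
    rw [hc2, one_mul] at hc1
    exact hc1.symm
  -- the set equality
  have heq : {P | P ∈ linSet U ∧ weight U P = r ∧
      P ≠ Submodule.span Fqn {((1 : Fqn), (0 : Fqn))}}
      = {P | ∃ ξ ∈ I, P = Submodule.span Fqn {(ξ, (1 : Fqn))}} := by
    ext P
    constructor
    · rintro ⟨⟨v, hv0, hvU, rfl⟩, hwP, hne⟩
      obtain ⟨s, t⟩ := v
      rw [hU, Submodule.mem_prod] at hvU
      obtain ⟨hsS, htT⟩ := hvU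
      by_cases ht : t = 0
      · exfalso
        subst ht
        have hs : s ≠ 0 := by
          intro h; exact hv0 (by simp [h])
        apply hne
        have : (s, (0:Fqn)) = s • ((1:Fqn), (0:Fqn)) := by simp
        rw [this]
        exact Submodule.span_singleton_smul_eq (IsUnit.mk0 s hs) _
      · have hst : t • (s * t⁻¹, (1:Fqn)) = (s, t) := by
          rw [Prod.smul_mk, smul_eq_mul, smul_eq_mul, mul_one, mul_comm, mul_assoc,
            inv_mul_cancel₀ ht, mul_one]
        have hsp : Submodule.span Fqn {(s, t)} = Submodule.span Fqn {(s * t⁻¹, (1:Fqn))} := by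
          rw [← hst]
          exact Submodule.span_singleton_smul_eq (IsUnit.mk0 t ht) _
        refine ⟨s * t⁻¹, ?_, hsp⟩
        rw [hsp] at hwP
        exact (hweight _).1 hwP
    · rintro ⟨ξ, hξ, rfl⟩
      have i0 : Fin r := ⟨0, hr⟩
      have hai0 : a i0 ≠ 0 := ha0 i0
      have haiS : ξ * a i0 ∈ S := by
        rw [mul_comm]; exact (hmemI ξ).1 hξ i0
      have haiT : a i0 ∈ T := hT ▸ Submodule.subset_span ⟨i0, rfl⟩
      refine ⟨⟨(ξ * a i0, a i0), ?_, ?_, ?_⟩, (hweight ξ).2 hξ, ?_⟩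
      · intro h
        exact hai0 (by simpa using congrArg Prod.snd h)
      · rw [hU, Submodule.mem_prod]
        exact ⟨haiS, haiT⟩
      · have : (ξ * a i0, a i0) = a i0 • (ξ, (1:Fqn)) := by
          rw [Prod.smul_mk, smul_eq_mul, smul_eq_mul, mul_one, mul_comm]
        rw [this]
        exact (Submodule.span_singleton_smul_eq (IsUnit.mk0 _ hai0) _).symm
      · intro h
        have : (ξ, (1:Fqn)) ∈ Submodule.span Fqn {((1:Fqn), (0:Fqn))} := by
          rw [← h]; exact Submodule.mem_span_singleton_self _
        obtain ⟨c, hc⟩ := Submodule.mem_span_singleton.1 this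
        have : c * 0 = 1 := by simpa using congrArg Prod.snd hc
        simp at this
  -- finiteness of I
  haveI hSfin : FiniteDimensional Fq S :=
    FiniteDimensional.of_finrank_pos (by rw [hS]; omega)
  haveI hbfin : FiniteDimensional Fq (bmul Fq (a ⟨0, hr⟩)⁻¹ S) := by
    unfold bmul
    infer_instance
  haveI hIfin : FiniteDimensional Fq I :=
    Submodule.finiteDimensional_of_le (hI ▸ iInf_le _ (⟨0, hr⟩ : Fin r))
  haveI : Finite I := Module.finite_of_finite Fq
  haveI : Fintype I := Fintype.ofFinite _
  refine ⟨heq, ?_⟩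
  rw [heq]
  have himg : {P | ∃ ξ ∈ I, P = Submodule.span Fqn {(ξ, (1 : Fqn))}}
      = (fun ξ : Fqn => Submodule.span Fqn {(ξ, (1 : Fqn))}) '' (I : Set Fqn) := by
    ext P
    simp only [Set.mem_image, SetLike.mem_coe, Set.mem_setOf_eq]
    constructor
    · rintro ⟨ξ, h1, h2⟩; exact ⟨ξ, h1, h2.symm⟩
    · rintro ⟨ξ, h1, h2⟩; exact ⟨ξ, h1, h2.symm⟩
  rw [himg, Set.ncard_image_of_injective _ hspan_inj, ← Nat.card_coe_set_eq,
    Nat.card_eq_fintype_card]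
  rw [← hq]
  exact Module.card_eq_pow_finrank
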